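/- For every finite string W over {A, X, B}, one has |(AXAW)| = 2t·|[W]| + |[XAWA]|, where |(·)| denotes the cyclic value and |[·]| the locked value in the tight puzzle. -/

import Mathlib

/-!
The "tight puzzle" of Schwartz–Tabachnikov.  Strings over the alphabet `{A, X, B}`;
word list (coefficient, weight): `X (1,0)`, `XA (1,1)`, `XAA (1,1)`, `AXA (2,1)`,
`AAA (-1,1)`, `BA (-1,1)`, `ABA (-1,1)`, `XXA (-1,1)`; in a parsing the word `X` may
never be immediately followed by the word `XA` or the word `BA`.
-/

open scoped Classical

/-- The three-letter alphabet. -/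
inductive PLetter | A | X | B
deriving DecidableEq

/-- Strings over the alphabet. -/
abbrev PWord := List PLetter

/-- The tight puzzle word list. -/
def tightWords : List PWord :=
  [[PLetter.X], [PLetter.X, PLetter.A], [PLetter.X, PLetter.A, PLetter.A],
   [PLetter.A, PLetter.X, PLetter.A], [PLetter.A, PLetter.A, PLetter.A],
   [PLetter.B, PLetter.A], [PLetter.A, PLetter.B, PLetter.A],
   [PLetter.X, PLetter.X, PLetter.A]]

/-- Coefficients of the words of the tight puzzle (`AXA ↦ 2`; `AAA, BA, ABA, XXA ↦ -1`;
`X, XA, XAA ↦ 1`). -/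
def tightCoeff (w : PWord) : ℤ :=
  if w = [PLetter.A, PLetter.X, PLetter.A] then 2
  else if w = [PLetter.A, PLetter.A, PLetter.A] ∨ w = [PLetter.B, PLetter.A] ∨
      w = [PLetter.A, PLetter.B, PLetter.A] ∨ w = [PLetter.X, PLetter.X, PLetter.A] then -1
  else 1

/-- Weights of the words: the word `X` has weight `0`, all other words weight `1`. -/
def wordWt (w : PWord) : ℕ := if w = [PLetter.X] then 0 else 1

/-- The forbidden adjacency: the word `X` immediately followed by `XA` or `BA`. -/
def Bad (u v : PWord) : Prop :=
  u = [PLetter.X] ∧ (v = [PLetter.X, PLetter.A] ∨ v = [PLetter.B, PLetter.A])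

/-- The contribution `coefficient · t^weight ∈ ℤ[t]` of a parsing `L`. -/
noncomputable def parseVal (c : PWord → ℤ) (L : List PWord) : Polynomial ℤ :=
  Polynomial.C ((L.map c).prod) * Polynomial.X ^ ((L.map wordWt).sum)

/-- `L` is a parsing in the tight puzzle: all its words are on the word list and the
forbidden adjacency never occurs. -/
def TightChain (L : List PWord) : Prop :=
  (∀ w ∈ L, w ∈ tightWords) ∧ List.Chain' (fun u v => ¬ Bad u v) L

/-- The *core* of a string: what remains after deleting all leading and trailing `X`s. -/
def core (s : PWord) : PWord :=
  ((s.dropWhile (· == PLetter.X)).reverse.dropWhile (· == PLetter.X)).reverse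

/-- `L` is a parsing of the bi-infinite string `⋯XX·W·XX⋯` (with the infinitely many
padding `X`s parsed as copies of the word `X` and trimmed away): the words of `L`
concatenate to `W` up to padding by `X`s on either side, `L` neither starts nor ends
with the word `X`, and (because of the padding `X`-words on the left) the first word
of `L` is not `XA` or `BA`. -/
def IsOpenParsing (W : PWord) (L : List PWord) : Prop :=
  TightChain L ∧ core L.flatten = core W ∧
  ∀ h : L ≠ [],
    L.head h ≠ [PLetter.X] ∧ L.head h ≠ [PLetter.X, PLetter.A] ∧
    L.head h ≠ [PLetter.B, PLetter.A] ∧ L.getLast h ≠ [PLetter.X]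

/-- `(r, L)` is a parsing of the cyclic string `(W)`: reading the necklace of the
letters of `W` starting at position `r`, the words of `L` concatenate to it, the
forbidden adjacency does not occur (cyclically), and `r < (last word).length`
(so that every parsing of the necklace is counted exactly once). -/
def IsCyclicParsing (W : PWord) (r : ℕ) (L : List PWord) : Prop :=
  TightChain L ∧
  ∃ h : L ≠ [], L.flatten = W.rotate r ∧ r < (L.getLast h).length ∧
    ¬ Bad (L.getLast h) (L.head h)

/-- `L` is a parsing of the locked string `[W]`: the words of `L` concatenate exactly
to `W`, no padding allowed. -/
def IsLockedParsing (W : PWord) (L : List PWord) : Prop :=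
  TightChain L ∧ L.flatten = W

/-- The nine words of both puzzles, as a function (used to enumerate parsings). -/
def wordOf : Fin 9 → PWord :=
  ![[PLetter.X], [PLetter.X, PLetter.A], [PLetter.X, PLetter.A, PLetter.A],
    [PLetter.X, PLetter.B, PLetter.A], [PLetter.A, PLetter.X, PLetter.A],
    [PLetter.A, PLetter.A, PLetter.A], [PLetter.B, PLetter.A],
    [PLetter.A, PLetter.B, PLetter.A], [PLetter.X, PLetter.X, PLetter.A]]

/-- The open value `|W| ∈ ℤ[t]`: the sum of `coefficient · t^weight` over all parsings
of the bi-infinite string `⋯XX·W·XX⋯` (any such parsing consists of at most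
`W.length + 2` words). -/
noncomputable def openVal (W : PWord) : Polynomial ℤ :=
  ∑ k ∈ Finset.range (W.length + 3), ∑ f : Fin k → Fin 9,
    if IsOpenParsing W ((List.ofFn f).map wordOf) then
      parseVal tightCoeff ((List.ofFn f).map wordOf)
    else 0

/-- The cyclic value `|(W)| ∈ ℤ[t]`: the sum of `coefficient · t^weight` over all
parsings of the cyclic string `(W)`. -/
noncomputable def cycVal (W : PWord) : Polynomial ℤ :=
  ∑ r ∈ Finset.range W.length, ∑ k ∈ Finset.range (W.length + 1), ∑ f : Fin k → Fin 9,
    if IsCyclicParsing W r ((List.ofFn f).map wordOf) then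
      parseVal tightCoeff ((List.ofFn f).map wordOf)
    else 0

/-- The locked value `|[W]| ∈ ℤ[t]`: the sum of `coefficient · t^weight` over all
parsings whose concatenation is exactly `W`. -/
noncomputable def lockVal (W : PWord) : Polynomial ℤ :=
  ∑ k ∈ Finset.range (W.length + 1), ∑ f : Fin k → Fin 9,
    if IsLockedParsing W ((List.ofFn f).map wordOf) then
      parseVal tightCoeff ((List.ofFn f).map wordOf)
    else 0

section Aux
open PLetter

lemma tw_ne_nil {w : PWord} (h : w ∈ tightWords) : w ≠ [] := by
  simp only [tightWords, List.mem_cons, List.not_mem_nil, or_false] at h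
  rcases h with rfl|rfl|rfl|rfl|rfl|rfl|rfl|rfl <;> simp

lemma tw_length_le {w : PWord} (h : w ∈ tightWords) : w.length ≤ 3 := by
  simp only [tightWords, List.mem_cons, List.not_mem_nil, or_false] at h
  rcases h with rfl|rfl|rfl|rfl|rfl|rfl|rfl|rfl <;> simp

lemma tw_getLast {w : PWord} (h : w ∈ tightWords) (h2 : w ≠ [X]) : w.getLast? = some A := by
  simp only [tightWords, List.mem_cons, List.not_mem_nil, or_false] at h
  rcases h with rfl|rfl|rfl|rfl|rfl|rfl|rfl|rfl <;> simp_all [List.getLast?]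

lemma tw_len_ge {w : PWord} (h : w ∈ tightWords) (h2 : w ≠ [X]) : 2 ≤ w.length := by
  simp only [tightWords, List.mem_cons, List.not_mem_nil, or_false] at h
  rcases h with rfl|rfl|rfl|rfl|rfl|rfl|rfl|rfl <;> simp_all

lemma flatten_getLast? (L : List PWord) (hne : L ≠ []) (hw : ∀ w ∈ L, w ≠ []) :
    L.flatten.getLast? = (L.getLast hne).getLast? := by
  induction L with
  | nil => simp at hne
  | cons a l ih =>
    cases l with
    | nil => simp
    | cons b m =>
      rw [List.flatten_cons, List.getLast_cons (by simp),
        ← ih (by simp) (fun v hv => hw v (List.mem_cons_of_mem _ hv))]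
      refine List.getLast?_append_of_ne_nil _ ?_
      rw [List.flatten_cons]
      exact fun hc => hw b (by simp) (List.append_eq_nil_iff.mp hc).1

lemma length_le_flatten (M : List PWord) (h : ∀ w ∈ M, w ≠ []) :
    M.length ≤ M.flatten.length := by
  induction M with
  | nil => simp
  | cons a l ih =>
    simp only [List.flatten_cons, List.length_append, List.length_cons]
    have ha : 1 ≤ a.length := List.length_pos_iff.mpr (h a (by simp))
    have := ih (fun v hv => h v (by simp [hv]))
    omega

end Aux
section Aux2
open PLetter

lemma rot1 (W : PWord) : (([A,X,A] ++ W).rotate 1) = [X,A] ++ W ++ [A] := by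
  show ((A :: ([X,A] ++ W)).rotate 1) = _
  rw [List.rotate_cons_succ, List.rotate_zero]

lemma rot2 (W : PWord) : (([A,X,A] ++ W).rotate 2) = ((A :: W) ++ [A]) ++ [X] := by
  show ((A :: (X :: ([A] ++ W))).rotate 2) = _
  rw [List.rotate_cons_succ]
  show ((X :: (([A] ++ W) ++ [A])).rotate 1) = _
  rw [List.rotate_cons_succ, List.rotate_zero]
  simp

lemma cyc0 (W : PWord) (L : List PWord) :
    IsCyclicParsing ([A,X,A] ++ W) 0 L ↔
      ∃ M, L = [A,X,A] :: M ∧ IsLockedParsing W M := by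
  constructor
  · rintro ⟨⟨hmem, hch⟩, hne, hflat, -, -⟩
    rw [List.rotate_zero] at hflat
    cases L with
    | nil => exact absurd rfl hne
    | cons w M =>
      have hw : w ∈ tightWords := hmem w List.mem_cons_self
      have hfl : w ++ M.flatten = [A,X,A] ++ W := by simpa using hflat
      simp only [tightWords, List.mem_cons, List.not_mem_nil, or_false] at hw
      have hwAXA : w = [A,X,A] := by
        rcases hw with rfl|rfl|rfl|rfl|rfl|rfl|rfl|rfl <;> simp_all
      subst hwAXA
      exact ⟨M, rfl, ⟨fun v hv => hmem v (List.mem_cons_of_mem _ hv), hch.tail⟩,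
        by simpa using hfl⟩
  · rintro ⟨M, rfl, ⟨hmem, hch⟩, hflat⟩
    have hmem' : ∀ v ∈ [A,X,A] :: M, v ∈ tightWords := by
      intro v hv
      rcases List.mem_cons.mp hv with rfl | hv
      · simp [tightWords]
      · exact hmem v hv
    refine ⟨⟨hmem', ?_⟩, List.cons_ne_nil _ _, ?_, ?_, ?_⟩
    · show List.IsChain _ ([A,X,A] :: M)
      rw [List.isChain_cons]
      exact ⟨fun v _ => by simp [Bad], hch⟩
    · rw [List.rotate_zero, List.flatten_cons, hflat]
    · have h1 := tw_ne_nil (hmem' _ (List.getLast_mem (List.cons_ne_nil _ _)))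
      exact List.length_pos_iff.mpr h1
    · simp [Bad, List.head_cons]

lemma cyc1 (W : PWord) (L : List PWord) :
    IsCyclicParsing ([A,X,A] ++ W) 1 L ↔ IsLockedParsing ([X,A] ++ W ++ [A]) L := by
  constructor
  · rintro ⟨tc, hne, hflat, -, -⟩
    exact ⟨tc, by rw [hflat, rot1]⟩
  · rintro ⟨⟨hmem, hch⟩, hflat⟩
    have hne : L ≠ [] := by rintro rfl; simp at hflat
    have hwnil : ∀ w ∈ L, w ≠ [] := fun w hw => tw_ne_nil (hmem w hw)
    have hlastA : (L.getLast hne).getLast? = some A := by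
      rw [← flatten_getLast? L hne hwnil, hflat]
      exact List.getLast?_append_of_ne_nil _ (by simp)
    have hlX : L.getLast hne ≠ [X] := by
      intro h; rw [h] at hlastA; simp [List.getLast?] at hlastA
    refine ⟨⟨hmem, hch⟩, hne, ?_, ?_, ?_⟩
    · rw [hflat, rot1]
    · exact tw_len_ge (hmem _ (List.getLast_mem hne)) hlX
    · simp [Bad, hlX]

lemma cyc_ge2 (W : PWord) (L : List PWord) (r : ℕ) (hr : 2 ≤ r) :
    ¬ IsCyclicParsing ([A,X,A] ++ W) r L := by
  rintro ⟨⟨hmem, -⟩, hne, hflat, hlt, -⟩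
  have hwmem : L.getLast hne ∈ tightWords := hmem _ (List.getLast_mem hne)
  have h3 : (L.getLast hne).length ≤ 3 := tw_length_le hwmem
  have hr2 : r = 2 := by omega
  subst hr2
  have hwX : L.getLast hne ≠ [X] := by
    intro h; rw [h] at hlt; simp at hlt
  have hA : (L.getLast hne).getLast? = some A := tw_getLast hwmem hwX
  have hfl : L.flatten.getLast? = some A := by
    rw [flatten_getLast? L hne (fun w hw => tw_ne_nil (hmem w hw))]; exact hA
  rw [hflat, rot2, List.getLast?_append_of_ne_nil _ (by simp)] at hfl
  simp [List.getLast?] at hfl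

lemma parseVal_cons (c : PWord → ℤ) (w : PWord) (M : List PWord) :
    parseVal c (w :: M) =
      Polynomial.C (c w) * Polynomial.X ^ wordWt w * parseVal c M := by
  simp only [parseVal, List.map_cons, List.prod_cons, List.sum_cons, map_mul, pow_add]
  ring

lemma wordOf_eq_AXA {i : Fin 9} : wordOf i = [A, X, A] ↔ i = 4 := by
  fin_cases i <;> simp [wordOf] <;> decide

end Aux2
section Aux3
open PLetter

lemma G1_eq (W : PWord) :
    (∑ k ∈ Finset.range (W.length + 3 + 1), ∑ f : Fin k → Fin 9,
      if IsCyclicParsing ([A,X,A] ++ W) 1 (List.map wordOf (List.ofFn f)) then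
        parseVal tightCoeff (List.map wordOf (List.ofFn f)) else 0)
      = lockVal ([X,A] ++ W ++ [A]) := by
  have hl : ([X,A] ++ W ++ [A]).length = W.length + 3 := by
    simp only [List.length_append, List.length_cons, List.length_nil]; omega
  rw [lockVal, hl]
  exact Finset.sum_congr rfl fun k _ => Finset.sum_congr rfl fun f _ =>
    if_congr (cyc1 W _) rfl rfl

lemma parseVal_AXA (M : List PWord) :
    parseVal tightCoeff ([A,X,A] :: M) =
      2 * Polynomial.X * parseVal tightCoeff M := by
  rw [parseVal_cons]
  have h1 : tightCoeff [A,X,A] = 2 := by simp [tightCoeff]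
  have h2 : wordWt [A,X,A] = 1 := by simp [wordWt]
  rw [h1, h2, pow_one]
  norm_num

lemma hT (W : PWord) (j : ℕ) :
    (∑ f : Fin (j+1) → Fin 9,
      if IsCyclicParsing ([A,X,A] ++ W) 0 (List.map wordOf (List.ofFn f)) then
        parseVal tightCoeff (List.map wordOf (List.ofFn f)) else 0)
    = 2 * Polynomial.X * ∑ g : Fin j → Fin 9,
        if IsLockedParsing W (List.map wordOf (List.ofFn g)) then
          parseVal tightCoeff (List.map wordOf (List.ofFn g)) else 0 := by
  rw [← Equiv.sum_comp (Fin.consEquiv (fun _ : Fin (j+1) => Fin 9)), Fintype.sum_prod_type]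
  have hLf : ∀ (i : Fin 9) (g : Fin j → Fin 9),
      List.map wordOf (List.ofFn ((Fin.consEquiv (fun _ : Fin (j+1) => Fin 9)) (i, g))) =
        wordOf i :: List.map wordOf (List.ofFn g) := by
    intro i g
    have : (Fin.consEquiv (fun _ : Fin (j+1) => Fin 9)) (i, g) = Fin.cons i g := by
      ext x
      refine Fin.cases ?_ ?_ x <;> simp [Fin.consEquiv]
    rw [this, List.ofFn_succ]
    simp [Fin.cons_zero, Fin.cons_succ]
  rw [Finset.mul_sum]
  rw [Finset.sum_comm]
  refine Finset.sum_congr rfl fun g _ => ?_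
  have hcond : ∀ i : Fin 9,
      IsCyclicParsing ([A,X,A] ++ W) 0 (wordOf i :: List.map wordOf (List.ofFn g)) ↔
        (i = 4 ∧ IsLockedParsing W (List.map wordOf (List.ofFn g))) := by
    intro i
    rw [cyc0]
    constructor
    · rintro ⟨M, hM, hlock⟩
      rw [List.cons.injEq] at hM
      exact ⟨wordOf_eq_AXA.mp hM.1, hM.2 ▸ hlock⟩
    · rintro ⟨rfl, h⟩
      exact ⟨List.map wordOf (List.ofFn g), by rw [wordOf_eq_AXA.mpr rfl], h⟩
  by_cases hP : IsLockedParsing W (List.map wordOf (List.ofFn g))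
  · rw [if_pos hP]
    calc (∑ i : Fin 9, if IsCyclicParsing ([A,X,A] ++ W) 0
            (List.map wordOf (List.ofFn ((Fin.consEquiv (fun _ : Fin (j+1) => Fin 9)) (i, g)))) then
          parseVal tightCoeff
            (List.map wordOf (List.ofFn ((Fin.consEquiv (fun _ : Fin (j+1) => Fin 9)) (i, g)))) else 0)
        = ∑ i : Fin 9, if i = 4 then
            parseVal tightCoeff (wordOf i :: List.map wordOf (List.ofFn g)) else 0 := by
          refine Finset.sum_congr rfl fun i _ => ?_
          rw [hLf i g]
          rw [if_congr ((hcond i).trans (and_iff_left hP)) rfl rfl]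
      _ = parseVal tightCoeff (wordOf 4 :: List.map wordOf (List.ofFn g)) := by
          rw [Finset.sum_ite_eq' Finset.univ (4 : Fin 9)
            (fun i => parseVal tightCoeff (wordOf i :: List.map wordOf (List.ofFn g)))]
          simp
      _ = 2 * Polynomial.X * parseVal tightCoeff (List.map wordOf (List.ofFn g)) := by
          rw [wordOf_eq_AXA.mpr rfl, parseVal_AXA]
  · rw [if_neg hP, mul_zero]
    refine Finset.sum_eq_zero fun i _ => ?_
    rw [hLf i g, if_neg]
    intro hc
    exact hP ((hcond i).mp hc).2

lemma S_zero (W : PWord) (j : ℕ) (hj : W.length + 1 ≤ j) :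
    (∑ g : Fin j → Fin 9,
      if IsLockedParsing W (List.map wordOf (List.ofFn g)) then
        parseVal tightCoeff (List.map wordOf (List.ofFn g)) else 0) = 0 := by
  refine Finset.sum_eq_zero fun g _ => if_neg ?_
  rintro ⟨⟨hmem, -⟩, hfl⟩
  have hle := length_le_flatten _ (fun w hw => tw_ne_nil (hmem w hw))
  rw [hfl] at hle
  simp only [List.length_map, List.length_ofFn] at hle
  omega

lemma G0_eq (W : PWord) :
    (∑ k ∈ Finset.range (W.length + 3 + 1), ∑ f : Fin k → Fin 9,
      if IsCyclicParsing ([A,X,A] ++ W) 0 (List.map wordOf (List.ofFn f)) then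
        parseVal tightCoeff (List.map wordOf (List.ofFn f)) else 0)
      = 2 * Polynomial.X * lockVal W := by
  rw [Finset.sum_range_succ']
  have hz : (∑ f : Fin 0 → Fin 9,
      if IsCyclicParsing ([A,X,A] ++ W) 0 (List.map wordOf (List.ofFn f)) then
        parseVal tightCoeff (List.map wordOf (List.ofFn f)) else 0) = 0 := by
    refine Finset.sum_eq_zero fun f _ => if_neg ?_
    rintro ⟨-, hne, -⟩
    exact hne (by simp)
  rw [hz, add_zero]
  have hstep : ∀ j ∈ Finset.range (W.length + 3),
      (∑ f : Fin (j+1) → Fin 9,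
        if IsCyclicParsing ([A,X,A] ++ W) 0 (List.map wordOf (List.ofFn f)) then
          parseVal tightCoeff (List.map wordOf (List.ofFn f)) else 0)
      = 2 * Polynomial.X * ∑ g : Fin j → Fin 9,
          if IsLockedParsing W (List.map wordOf (List.ofFn g)) then
            parseVal tightCoeff (List.map wordOf (List.ofFn g)) else 0 :=
    fun j _ => hT W j
  rw [Finset.sum_congr rfl hstep, ← Finset.mul_sum, lockVal]
  congr 1
  refine (Finset.sum_subset (Finset.range_subset_range.mpr (by omega)) ?_).symm
  intro j _ hj2
  exact S_zero W j (by simpa using hj2)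

end Aux3
open PLetter in
/-- For every finite string `W`, `|(AXAW)| = 2t·|[W]| + |[XAWA]|` (cyclic vs. locked
values in the tight puzzle). -/
theorem cyclic_AXA (W : PWord) :
    cycVal ([A, X, A] ++ W) =
      2 * Polynomial.X * lockVal W + lockVal ([X, A] ++ W ++ [A]) := by
  classical
  have hlen : ([A,X,A] ++ W).length = W.length + 3 := by
    simp only [List.length_append, List.length_cons, List.length_nil]; omega
  rw [cycVal, hlen]
  have hsub : ({0,1} : Finset ℕ) ⊆ Finset.range (W.length + 3) := by
    intro x hx
    simp only [Finset.mem_insert, Finset.mem_singleton] at hx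
    rcases hx with rfl | rfl <;> simp
  refine Eq.trans (Finset.sum_subset hsub ?_).symm ?_
  · intro r _ hr2
    have h2 : 2 ≤ r := by
      simp only [Finset.mem_insert, Finset.mem_singleton] at hr2; omega
    refine Finset.sum_eq_zero fun k _ => Finset.sum_eq_zero fun f _ => ?_
    exact if_neg (cyc_ge2 W _ r h2)
  · rw [Finset.sum_pair (by norm_num : (0:ℕ) ≠ 1)]
    rw [G0_eq W, G1_eq W]
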